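/- Let m, d ≥ 1, let W be an m×d real matrix, c ∈ ℝ^m, and x ∈ ℝ^d. Then Σ_{j=1}^m c_j · max(0, Σ_{i=1}^d W_{ji} x_i) = Σ_{j=1}^m sign(c_j) · max(0, Σ_{i=1}^d sign(W_{ji}) · (|W_{ji}| · |c_j| · x_i)). That is, the one-hidden-layer ReLU network equals the composition of the path enumeration function (i,j) ↦ |W_{ji}| · |c_j| · x_i with a tree network whose weights lie in {−1, 0, 1} and are fully determined by the signs of the original weights. -/
import Mathlib

/-- **Decomposition of a one-hidden-layer ReLU network into the path enumeration
function and a sign tree network.** The network `x ↦ ∑ⱼ cⱼ max(0, ∑ᵢ Wⱼᵢ xᵢ)` equals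
the composition of the path enumeration function `(i,j) ↦ |Wⱼᵢ| · |cⱼ| · xᵢ` with a
tree network whose weights are the signs (`∈ {-1,0,1}`) of the original weights. -/
lemma sign_mul_abs' (r : ℝ) : Real.sign r * |r| = r := by
  rcases lt_trichotomy r 0 with h|h|h
  · rw [Real.sign_of_neg h, abs_of_neg h]; ring
  · simp [h]
  · rw [Real.sign_of_pos h, abs_of_pos h]; ring

theorem relu_network_path_decomposition
    (m d : ℕ) (hm : 1 ≤ m) (hd : 1 ≤ d)
    (W : Matrix (Fin m) (Fin d) ℝ) (c : Fin m → ℝ) (x : Fin d → ℝ) :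
    ∑ j : Fin m, c j * max 0 (∑ i : Fin d, W j i * x i)
      = ∑ j : Fin m, Real.sign (c j) *
          max 0 (∑ i : Fin d, Real.sign (W j i) * (|W j i| * |c j| * x i)) := by
  refine Finset.sum_congr rfl fun j _ => ?_
  have h1 : ∀ i : Fin d, Real.sign (W j i) * (|W j i| * |c j| * x i)
      = |c j| * (W j i * x i) := by
    intro i
    rw [show Real.sign (W j i) * (|W j i| * |c j| * x i)
        = (Real.sign (W j i) * |W j i|) * (|c j| * x i) by ring,
      sign_mul_abs']
    ring
  simp only [h1, ← Finset.mul_sum]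
  set t := ∑ i : Fin d, W j i * x i with ht
  rcases le_total 0 t with h | h
  · rw [max_eq_right h, max_eq_right (mul_nonneg (abs_nonneg _) h),
      show Real.sign (c j) * (|c j| * t) = (Real.sign (c j) * |c j|) * t by ring,
      sign_mul_abs']
  · rw [max_eq_left (by linarith), max_eq_left
      (mul_nonpos_of_nonneg_of_nonpos (abs_nonneg _) h), mul_zero, mul_zero]
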